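/- For every k ∈ {1,…,d}, the polynomial 1 − z_k² belongs to the ideal of ℝ[z₁,…,z_d] generated by the polynomials q̃_Θ, where Θ ranges over all d×d integer matrices each of whose columns is a 0-1 vector with exactly one or exactly two entries equal to 1, such that det Θ = ±1 and at least one column of Θ equals the k-th standard unit vector e_k. -/

import Mathlib

open MvPolynomial

/-- For a `d×d` integer matrix `Θ` each of whose columns is a 0-1 vector with exactly one
or two entries equal to 1, the modified polynomial `q̃_Θ(z) = ∏_{columns θ} r̃_θ(z)`, where
`r̃_θ(z) = (1+z_k)/2` if `θ = e_k` and `r̃_θ(z) = (z_j+z_k)/2` if `θ = e_j + e_k`, `j ≠ k`. -/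
noncomputable def qtilde {d : ℕ} (Θ : Matrix (Fin d) (Fin d) ℤ) : MvPolynomial (Fin d) ℝ :=
  ∏ c : Fin d,
    (C (1 / 2 : ℝ) *
      ((if (∑ i, Θ i c) = 1 then 1 else 0) + ∑ i : Fin d, C ((Θ i c : ℝ)) * X i))

namespace Stmt6Aux

variable {d : ℕ}

/-- A bijective "rank" function on `Fin d` sending `k` to `0`. -/
def ord (k : Fin d) : Fin d → Fin d := fun i => Equiv.swap k (⟨0, k.pos⟩ : Fin d) i

lemma ord_inj (k : Fin d) : Function.Injective (ord k) :=
  (Equiv.swap k (⟨0, k.pos⟩ : Fin d)).injective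

lemma ord_k (k : Fin d) : ord k k = (⟨0, k.pos⟩ : Fin d) := Equiv.swap_apply_left _ _

/-- The factor contributed by column `c`. -/
noncomputable def fac (c : Fin d) : Option (Fin d) → MvPolynomial (Fin d) ℝ
  | none => 1 + X c
  | some j => X c + X j

/-- The 0-1 matrix associated to an assignment `g` of optional "partners" to columns. -/
def theta (k : Fin d) (g : Fin d → Option (Fin d)) : Matrix (Fin d) (Fin d) ℤ :=
  fun i c => if i = c then 1 else if (c ≠ k ∧ g c = some i) then 1 else 0

/-- Admissibility of `g` relative to a set `S` of columns (not containing `k`). -/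
def Ok (k : Fin d) (S : Finset (Fin d)) (g : Fin d → Option (Fin d)) : Prop :=
  ∀ i ∈ S, ∀ j, g i = some j → j = k ∨ (j ∈ S ∧ ord k j < ord k i)

/-- The linear span of the partial products over `S`. -/
noncomputable def Phi (k : Fin d) (S : Finset (Fin d)) :
    Submodule ℝ (MvPolynomial (Fin d) ℝ) :=
  Submodule.span ℝ {p | ∃ g, Ok k S g ∧ p = ∏ i ∈ S, fac i (g i)}

lemma mul_fac_mem {k : Fin d} {S : Finset (Fin d)} {c : Fin d} {o : Option (Fin d)}
    (hc : c ∉ S) (ho : ∀ j, o = some j → j = k ∨ (j ∈ S ∧ ord k j < ord k c))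
    {p : MvPolynomial (Fin d) ℝ} (hp : p ∈ Phi k S) :
    p * fac c o ∈ Phi k (insert c S) := by
  refine Submodule.span_induction
    (p := fun q _ => q * fac c o ∈ Phi k (insert c S)) ?_ ?_ ?_ ?_ hp
  · rintro q ⟨g, hg, rfl⟩
    refine Submodule.subset_span ⟨Function.update g c o, ?_, ?_⟩
    · intro i hi j hj
      rcases Finset.mem_insert.mp hi with h | h
      · subst h
        rw [Function.update_self] at hj
        rcases ho j hj with h' | ⟨h1, h2⟩
        · exact Or.inl h'
        · exact Or.inr ⟨Finset.mem_insert_of_mem h1, h2⟩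
      · have hic : i ≠ c := fun hh => hc (by rw [← hh]; exact h)
        rw [Function.update_of_ne hic] at hj
        rcases hg i h j hj with h' | ⟨h1, h2⟩
        · exact Or.inl h'
        · exact Or.inr ⟨Finset.mem_insert_of_mem h1, h2⟩
    · rw [Finset.prod_insert hc, Function.update_self, mul_comm]
      congr 1
      refine Finset.prod_congr rfl fun i hi => ?_
      rw [Function.update_of_ne (fun hh => hc (by rw [← hh]; exact hi))]
  · rw [zero_mul]; exact zero_mem _
  · intro a b _ _ ha hb
    rw [add_mul]; exact add_mem ha hb
  · intro r a _ ha
    rw [smul_mul_assoc]; exact Submodule.smul_mem _ _ ha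

/-- The key double induction: F and G statements. -/
theorem FG (k : Fin d) :
    ∀ S : Finset (Fin d), k ∉ S → S.Nonempty →
      ((2 : MvPolynomial (Fin d) ℝ) ^ (S.card - 1) * (1 - X k) ∈ Phi k S) ∧
      (∃ B ∈ Phi k S, ∃ Cf : Fin d → MvPolynomial (Fin d) ℝ,
        (∀ j ∈ S, Cf j ∈ Phi k S) ∧
        (2 : MvPolynomial (Fin d) ℝ) ^ S.card * (1 - X k)
          = (1 - X k) * B + ∑ j ∈ S, (1 - X j) * Cf j) := by
  intro S
  induction S using Finset.strongInduction with
  | _ S ih =>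
    intro hk hne
    obtain ⟨c, hcS, hmax⟩ := Finset.exists_max_image S (ord k) hne
    have hck : c ≠ k := fun h => hk (h ▸ hcS)
    set T := S.erase c with hTdef
    have hcT : c ∉ T := Finset.notMem_erase c S
    have hins : insert c T = S := Finset.insert_erase hcS
    have hkT : k ∉ T := fun h => hk (Finset.mem_of_mem_erase h)
    have hTsub : T ⊂ S := Finset.erase_ssubset hcS
    have hmax' : ∀ j ∈ T, ord k j < ord k c := by
      intro j hj
      exact lt_of_le_of_ne (hmax j (Finset.mem_of_mem_erase hj))
        (fun h => (Finset.ne_of_mem_erase hj) (ord_inj k h))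
    have cardS : S.card = T.card + 1 := by
      rw [← hins, Finset.card_insert_of_notMem hcT]
    -- membership helpers
    have memNone : ∀ p ∈ Phi k T, p * (1 + X c) ∈ Phi k S := by
      intro p hp
      rw [← hins]
      exact mul_fac_mem hcT (o := none) (by intro j hj; cases hj) hp
    have memK : ∀ p ∈ Phi k T, p * (X c + X k) ∈ Phi k S := by
      intro p hp
      rw [← hins]
      refine mul_fac_mem hcT (o := some k) ?_ hp
      intro j hj
      exact Or.inl (Option.some_inj.mp hj).symm
    have memJ : ∀ j ∈ T, ∀ p ∈ Phi k T, p * (X c + X j) ∈ Phi k S := by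
      intro j hj p hp
      rw [← hins]
      refine mul_fac_mem hcT (o := some j) ?_ hp
      intro j' hj'
      have : j = j' := Option.some_inj.mp hj'
      subst this
      exact Or.inr ⟨hj, hmax' j hj⟩
    by_cases hTne : T.Nonempty
    · -- inductive step
      obtain ⟨-, B, hB, Cf, hCf, heq⟩ := ih T hTsub hkT hTne
      have hFmem : (2 : MvPolynomial (Fin d) ℝ) ^ T.card * (1 - X k) ∈ Phi k S := by
        have key : (2 : MvPolynomial (Fin d) ℝ) ^ T.card * (1 - X k)
            = (B * (1 + X c) - B * (X c + X k))
              + ∑ j ∈ T, (Cf j * (1 + X c) - Cf j * (X c + X j)) := by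
          have hsum : ∑ j ∈ T, (Cf j * (1 + X c) - Cf j * (X c + X j))
              = ∑ j ∈ T, (1 - X j) * Cf j :=
            Finset.sum_congr rfl fun j _ => by ring
          rw [hsum, heq]; ring
        rw [key]
        exact add_mem (sub_mem (memNone B hB) (memK B hB))
          (Submodule.sum_mem _ fun j hj =>
            sub_mem (memNone _ (hCf j hj)) (memJ j hj _ (hCf j hj)))
      constructor
      · have hc1 : S.card - 1 = T.card := by omega
        rw [hc1]; exact hFmem
      · refine ⟨B * (1 + X c), memNone B hB,
          fun j => if j = c then (2 : MvPolynomial (Fin d) ℝ) ^ T.card * (1 - X k)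
            else Cf j * (1 + X c), ?_, ?_⟩
        · intro j hj
          dsimp only
          by_cases hjc : j = c
          · rw [if_pos hjc]; exact hFmem
          · rw [if_neg hjc]
            have hjT : j ∈ T := by
              rw [← hins] at hj
              rcases Finset.mem_insert.mp hj with h | h
              · exact absurd h hjc
              · exact h
            exact memNone _ (hCf j hjT)
        · dsimp only
          rw [cardS, ← hins, Finset.sum_insert hcT, if_pos rfl]
          have hsum : ∑ j ∈ T, (1 - X j) *
              (if j = c then (2 : MvPolynomial (Fin d) ℝ) ^ T.card * (1 - X k)
               else Cf j * (1 + X c))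
              = (∑ j ∈ T, (1 - X j) * Cf j) * (1 + X c) := by
            rw [Finset.sum_mul]
            refine Finset.sum_congr rfl fun j hj => ?_
            rw [if_neg (ne_of_mem_of_not_mem hj hcT)]
            ring
          rw [hsum]
          linear_combination (1 + X c : MvPolynomial (Fin d) ℝ) * heq
    · -- base case : S = {c}
      have hSc : S = {c} := by
        rw [← hins, Finset.not_nonempty_iff_eq_empty.mp hTne]; rfl
      have g1 : (1 + X c : MvPolynomial (Fin d) ℝ) ∈ Phi k S := by
        refine Submodule.subset_span ⟨fun _ => none, ?_, ?_⟩
        · intro i _ j hj; cases hj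
        · rw [hSc, Finset.prod_singleton]; rfl
      have g2 : (X c + X k : MvPolynomial (Fin d) ℝ) ∈ Phi k S := by
        refine Submodule.subset_span ⟨fun _ => some k, ?_, ?_⟩
        · intro i _ j hj; exact Or.inl (Option.some_inj.mp hj).symm
        · rw [hSc, Finset.prod_singleton]; rfl
      have hF : (2 : MvPolynomial (Fin d) ℝ) ^ (S.card - 1) * (1 - X k) ∈ Phi k S := by
        have hcard : S.card - 1 = 0 := by rw [hSc, Finset.card_singleton]
        rw [hcard, pow_zero, one_mul]
        have : (1 - X k : MvPolynomial (Fin d) ℝ) = (1 + X c) - (X c + X k) := by ring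
        rw [this]
        exact sub_mem g1 g2
      refine ⟨hF, 1 + X c, g1, fun _ => (1 + X c) - (X c + X k),
        fun j _ => sub_mem g1 g2, ?_⟩
      rw [hSc, Finset.sum_singleton, Finset.card_singleton]
      ring

/-! ### Properties of `theta` -/

lemma theta_col_k (k : Fin d) (g : Fin d → Option (Fin d)) (i : Fin d) :
    theta k g i k = if i = k then 1 else 0 := by
  unfold theta
  by_cases h : i = k <;> simp [h]

lemma theta_col_none {k : Fin d} {g : Fin d → Option (Fin d)} {c : Fin d}
    (hg : g c = none) (i : Fin d) :
    theta k g i c = if i = c then 1 else 0 := by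
  unfold theta
  by_cases h : i = c <;> simp [h, hg]

lemma theta_col_some {k : Fin d} {g : Fin d → Option (Fin d)} {c j : Fin d}
    (hc : c ≠ k) (hg : g c = some j) (hjc : j ≠ c) (i : Fin d) :
    theta k g i c = (if i = c then 1 else 0) + (if i = j then 1 else 0) := by
  unfold theta
  by_cases h1 : i = c
  · subst h1
    rw [if_pos rfl, if_pos rfl, if_neg (fun h => hjc h.symm), add_zero]
  · rw [if_neg h1, if_neg h1]
    by_cases h2 : i = j
    · subst h2
      rw [if_pos ⟨hc, hg⟩, if_pos rfl, zero_add]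
    · rw [if_neg, if_neg h2, add_zero]
      rintro ⟨-, hsome⟩
      rw [hg] at hsome
      exact h2 (Option.some_inj.mp hsome).symm

lemma sum_ite_one (a : Fin d) : (∑ i : Fin d, (if i = a then (1:ℤ) else 0)) = 1 := by
  simp

lemma col_poly_single (v : Fin d → ℤ) (a : Fin d)
    (hv : ∀ i, v i = if i = a then 1 else 0) :
    ((if (∑ i, v i) = 1 then 1 else 0) + ∑ i : Fin d, C ((v i : ℝ)) * X i)
      = (1 + X a : MvPolynomial (Fin d) ℝ) := by
  have h1 : (∑ i, v i) = 1 := by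
    simp only [hv]; exact sum_ite_one a
  have h2 : (∑ i : Fin d, C ((v i : ℝ)) * X i) = (X a : MvPolynomial (Fin d) ℝ) := by
    have : ∀ i : Fin d, C ((v i : ℝ)) * X i
        = (if i = a then X i else 0 : MvPolynomial (Fin d) ℝ) := by
      intro i
      rw [hv i]
      by_cases h : i = a <;> simp [h]
    rw [Finset.sum_congr rfl fun i _ => this i]
    simp
  rw [h1, if_pos rfl, h2]

lemma col_poly_double (v : Fin d → ℤ) (a b : Fin d) (hab : a ≠ b)
    (hv : ∀ i, v i = (if i = a then 1 else 0) + (if i = b then 1 else 0)) :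
    ((if (∑ i, v i) = 1 then 1 else 0) + ∑ i : Fin d, C ((v i : ℝ)) * X i)
      = (X a + X b : MvPolynomial (Fin d) ℝ) := by
  have h1 : (∑ i, v i) = 2 := by
    simp only [hv, Finset.sum_add_distrib, sum_ite_one]; norm_num
  have h2 : (∑ i : Fin d, C ((v i : ℝ)) * X i)
      = (X a + X b : MvPolynomial (Fin d) ℝ) := by
    have : ∀ i : Fin d, C ((v i : ℝ)) * X i
        = ((if i = a then X i else 0) + (if i = b then X i else 0)
            : MvPolynomial (Fin d) ℝ) := by
      intro i
      rw [hv i]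
      by_cases h : i = a
      · subst h
        rw [if_neg hab, if_pos rfl, if_neg hab]
        push_cast
        simp
      · by_cases h' : i = b
        · subst h'; simp [h]
        · simp [h, h']
    rw [Finset.sum_congr rfl fun i _ => this i, Finset.sum_add_distrib]
    simp
  rw [h1, if_neg (by decide), h2, zero_add]

lemma qtilde_theta (k : Fin d) (g : Fin d → Option (Fin d))
    (hg : ∀ c, c ≠ k → ∀ j, g c = some j → j ≠ c) :
    qtilde (theta k g)
      = C ((1/2 : ℝ)^d) * ((1 + X k) * ∏ i ∈ Finset.univ.erase k, fac i (g i)) := by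
  unfold qtilde
  rw [Finset.prod_mul_distrib, Finset.prod_const, Finset.card_univ, Fintype.card_fin,
    ← map_pow]
  congr 1
  rw [← Finset.mul_prod_erase Finset.univ _ (Finset.mem_univ k)]
  congr 1
  · exact col_poly_single _ k (theta_col_k k g)
  · refine Finset.prod_congr rfl fun c hc => ?_
    have hck : c ≠ k := Finset.ne_of_mem_erase hc
    match ho : g c with
    | none =>
      exact col_poly_single _ c (theta_col_none ho)
    | some j =>
      exact col_poly_double _ c j (fun h => (hg c hck j ho) h.symm)
        (theta_col_some hck ho (hg c hck j ho))

lemma theta_det (k : Fin d) (g : Fin d → Option (Fin d))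
    (hg : ∀ c, c ≠ k → ∀ j, g c = some j → (j = k ∨ ord k j < ord k c)) :
    (theta k g).det = 1 := by
  set e : Equiv.Perm (Fin d) := Equiv.swap k (⟨0, k.pos⟩ : Fin d) with he
  have hsub : ((theta k g).submatrix e e).det = (theta k g).det :=
    Matrix.det_submatrix_equiv_self e _
  have tri : ((theta k g).submatrix e e).BlockTriangular id := by
    intro i j hij
    show theta k g (e i) (e j) = 0
    unfold theta
    rw [if_neg, if_neg]
    · rintro ⟨hek, hsome⟩
      rcases hg (e j) hek (e i) hsome with h | h
      · -- e i = k, so i = ord of k = 0, contradicting j < i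
        have : i = (⟨0, k.pos⟩ : Fin d) := by
          have := congrArg e h
          rwa [Equiv.swap_apply_self, he, Equiv.swap_apply_left] at this
        rw [this] at hij
        exact absurd hij (by simp [Fin.lt_def])
      · -- ord (e i) < ord (e j), i.e. i < j
        have h1 : ord k (e i) = i := Equiv.swap_apply_self _ _ _
        have h2 : ord k (e j) = j := Equiv.swap_apply_self _ _ _
        rw [h1, h2] at h
        exact absurd h (not_lt_of_gt hij)
    · intro h
      exact absurd (e.injective h) (ne_of_gt hij)
  rw [← hsub, Matrix.det_of_upperTriangular tri]
  refine Finset.prod_eq_one fun i _ => ?_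
  show theta k g (e i) (e i) = 1
  unfold theta
  rw [if_pos rfl]

lemma theta_entries (k : Fin d) (g : Fin d → Option (Fin d)) :
    ∀ i c, theta k g i c = 0 ∨ theta k g i c = 1 := by
  intro i c
  unfold theta
  by_cases h1 : i = c
  · right; rw [if_pos h1]
  · by_cases h2 : c ≠ k ∧ g c = some i
    · right; rw [if_neg h1, if_pos h2]
    · left; rw [if_neg h1, if_neg h2]

lemma theta_sums (k : Fin d) (g : Fin d → Option (Fin d))
    (hg : ∀ c, c ≠ k → ∀ j, g c = some j → j ≠ c) :
    ∀ c, (∑ i, theta k g i c) = 1 ∨ (∑ i, theta k g i c) = 2 := by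
  intro c
  by_cases hck : c = k
  · left
    subst hck
    simp only [theta_col_k]
    exact sum_ite_one c
  · match ho : g c with
    | none =>
      left
      simp only [theta_col_none ho]
      exact sum_ite_one c
    | some j =>
      right
      simp only [theta_col_some hck ho (hg c hck j ho)]
      rw [Finset.sum_add_distrib, sum_ite_one, sum_ite_one]; norm_num

/-- The generating set of the ideal. -/
def genSet (k : Fin d) : Set (MvPolynomial (Fin d) ℝ) :=
  {q : MvPolynomial (Fin d) ℝ | ∃ Θ : Matrix (Fin d) (Fin d) ℤ,
    (∀ i c, Θ i c = 0 ∨ Θ i c = 1) ∧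
    (∀ c, (∑ i, Θ i c) = 1 ∨ (∑ i, Θ i c) = 2) ∧
    (Θ.det = 1 ∨ Θ.det = -1) ∧
    (∃ c, ∀ i, Θ i c = if i = k then 1 else 0) ∧
    q = qtilde Θ}

lemma gen_mem (k : Fin d) (g : Fin d → Option (Fin d))
    (hg : ∀ c, c ≠ k → ∀ j, g c = some j → (j = k ∨ ord k j < ord k c)) :
    qtilde (theta k g) ∈ genSet k := by
  have hne : ∀ c, c ≠ k → ∀ j, g c = some j → j ≠ c := by
    intro c hc j hj
    rcases hg c hc j hj with h | h
    · exact h ▸ (Ne.symm hc)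
    · exact fun hh => absurd (hh ▸ h) (lt_irrefl _)
  exact ⟨theta k g, theta_entries k g, theta_sums k g hne,
    Or.inl (theta_det k g hg), ⟨k, theta_col_k k g⟩, rfl⟩

end Stmt6Aux

open Stmt6Aux in
/-- For every `k`, the polynomial `1 − z_k²` lies in the ideal generated by the `q̃_Θ`
where `Θ` ranges over `d×d` integer matrices whose columns are 0-1 vectors with exactly
one or two ones, with `det Θ = ±1`, and having `e_k` among their columns. -/
theorem stmt_6 (d : ℕ) (k : Fin d) :
    (1 - X k ^ 2 : MvPolynomial (Fin d) ℝ) ∈ Ideal.span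
      {q : MvPolynomial (Fin d) ℝ | ∃ Θ : Matrix (Fin d) (Fin d) ℤ,
        (∀ i c, Θ i c = 0 ∨ Θ i c = 1) ∧
        (∀ c, (∑ i, Θ i c) = 1 ∨ (∑ i, Θ i c) = 2) ∧
        (Θ.det = 1 ∨ Θ.det = -1) ∧
        (∃ c, ∀ i, Θ i c = if i = k then 1 else 0) ∧
        q = qtilde Θ} := by
  show (1 - X k ^ 2 : MvPolynomial (Fin d) ℝ) ∈ Ideal.span (genSet k)
  by_cases hd : (Finset.univ.erase k : Finset (Fin d)).Nonempty
  · -- main case : d ≥ 2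
    set S : Finset (Fin d) := Finset.univ.erase k with hS
    have hkS : k ∉ S := Finset.notMem_erase k _
    obtain ⟨hF, -⟩ := FG k S hkS hd
    have step : ∀ p ∈ Phi k S, (1 + X k) * p ∈ Ideal.span (genSet k) := by
      intro p hp
      refine Submodule.span_induction
        (p := fun q _ => (1 + X k) * q ∈ Ideal.span (genSet k)) ?_ ?_ ?_ ?_ hp
      · rintro q ⟨g, hOk, rfl⟩
        have hg : ∀ c, c ≠ k → ∀ j, g c = some j → (j = k ∨ ord k j < ord k c) := by
          intro c hc j hj
          have hcS : c ∈ S := Finset.mem_erase.mpr ⟨hc, Finset.mem_univ c⟩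
          rcases hOk c hcS j hj with h | ⟨-, h⟩
          · exact Or.inl h
          · exact Or.inr h
        have hne : ∀ c, c ≠ k → ∀ j, g c = some j → j ≠ c := by
          intro c hc j hj
          rcases hg c hc j hj with h | h
          · exact h ▸ (Ne.symm hc)
          · exact fun hh => absurd (hh ▸ h) (lt_irrefl _)
        have key : (1 + X k) * ∏ i ∈ S, fac i (g i)
            = C ((2:ℝ)^d) * qtilde (theta k g) := by
          rw [qtilde_theta k g hne, ← mul_assoc, ← C_mul]
          have h1 : (2:ℝ)^d * (1/2)^d = 1 := by
            rw [← mul_pow]; norm_num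
          rw [h1, C_1, one_mul]
        rw [key]
        exact Ideal.mul_mem_left _ _ (Ideal.subset_span (gen_mem k g hg))
      · rw [mul_zero]; exact Ideal.zero_mem _
      · intro a b _ _ ha hb
        rw [mul_add]; exact Ideal.add_mem _ ha hb
      · intro r a _ ha
        rw [smul_eq_C_mul, mul_left_comm]
        exact Ideal.mul_mem_left _ _ ha
    have h1 : (1 + X k) * ((2 : MvPolynomial (Fin d) ℝ) ^ (S.card - 1) * (1 - X k))
        ∈ Ideal.span (genSet k) := step _ hF
    have hpow : ((2 : MvPolynomial (Fin d) ℝ)) ^ (S.card - 1)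
        = C ((2:ℝ) ^ (S.card - 1)) := by
      rw [map_pow, map_ofNat]
    have h2 : C (((2:ℝ) ^ (S.card - 1))⁻¹)
        * ((1 + X k) * ((2 : MvPolynomial (Fin d) ℝ) ^ (S.card - 1) * (1 - X k)))
        = 1 - X k ^ 2 := by
      rw [hpow]
      have e1 : C (((2:ℝ) ^ (S.card - 1))⁻¹)
          * ((1 + X k) * (C ((2:ℝ) ^ (S.card - 1)) * (1 - X k)))
          = (C (((2:ℝ) ^ (S.card - 1))⁻¹) * C ((2:ℝ) ^ (S.card - 1)))
            * ((1 + X k) * (1 - X k)) := by ring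
      rw [e1, ← C_mul, inv_mul_cancel₀ (pow_ne_zero _ two_ne_zero), C_1, one_mul]
      ring
    rw [← h2]
    exact Ideal.mul_mem_left _ _ h1
  · -- degenerate case : univ = {k}
    have huniv : (Finset.univ : Finset (Fin d)) = {k} := by
      ext i
      simp only [Finset.mem_univ, true_iff, Finset.mem_singleton]
      by_contra h
      exact hd ⟨i, Finset.mem_erase.mpr ⟨h, Finset.mem_univ i⟩⟩
    have hq : qtilde (1 : Matrix (Fin d) (Fin d) ℤ) = C (1/2 : ℝ) * (1 + X k) := by
      unfold qtilde
      rw [huniv, Finset.prod_singleton]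
      congr 1
      rw [Finset.sum_singleton, Finset.sum_singleton, Matrix.one_apply_eq]
      simp
    have hgen : (C (1/2 : ℝ) * (1 + X k) : MvPolynomial (Fin d) ℝ) ∈ genSet k := by
      refine ⟨1, ?_, ?_, Or.inl Matrix.det_one, ⟨k, fun i => Matrix.one_apply⟩, hq.symm⟩
      · intro i c
        rw [Matrix.one_apply]
        by_cases h : i = c
        · right; rw [if_pos h]
        · left; rw [if_neg h]
      · intro c
        left
        have hck : c = k := by
          have : c ∈ ({k} : Finset (Fin d)) := huniv ▸ Finset.mem_univ c
          simpa using this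
        subst hck
        rw [huniv, Finset.sum_singleton, Matrix.one_apply_eq]
    have hfinal : (1 - X k ^ 2 : MvPolynomial (Fin d) ℝ)
        = (2 - 2 * X k) * (C (1/2 : ℝ) * (1 + X k)) := by
      have h2 : (2 : MvPolynomial (Fin d) ℝ) * C (1/2 : ℝ) = 1 := by
        rw [show (2 : MvPolynomial (Fin d) ℝ) = C (2:ℝ) from (map_ofNat C 2).symm, ← C_mul]
        norm_num
      have e1 : (2 - 2 * X k) * (C (1/2 : ℝ) * (1 + X k))
          = ((2 : MvPolynomial (Fin d) ℝ) * C (1/2 : ℝ)) * ((1 - X k) * (1 + X k)) := by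
        ring
      rw [e1, h2, one_mul]
      ring
    rw [hfinal]
    exact Ideal.mul_mem_left _ _ (Ideal.subset_span hgen)
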